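/- arXiv:2209.01399 — 2 statements merged into one kernel-verified Lean document; each statement's English description precedes it below -/
import Mathlib

section
/- Let M be an fs-module. Then M is Noetherian if and only if M/Rad(M) is Noetherian, and M is Artinian if and only if M/Rad(M) is Artinian. -/
/-- A submodule `N` of `M` is small (superfluous): `N + A = M` implies `A = M`. -/
def IsSmallSubmodule {R M : Type*} [Ring R] [AddCommGroup M] [Module R M]
    (N : Submodule R M) : Prop :=
  ∀ A : Submodule R M, N ⊔ A = ⊤ → A = ⊤

/-- `M` is an fs-module: it has only finitely many small submodules. -/
def IsFsModule (R M : Type*) [Ring R] [AddCommGroup M] [Module R M] : Prop :=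
  {N : Submodule R M | IsSmallSubmodule N}.Finite

/-- The radical of `M`, as the sum of all small submodules of `M`. -/
def modRad (R M : Type*) [Ring R] [AddCommGroup M] [Module R M] : Submodule R M :=
  sSup {N : Submodule R M | IsSmallSubmodule N}

/-- The radical of `M`, as the intersection of all maximal submodules of `M`. -/
def modRad' (R M : Type*) [Ring R] [AddCommGroup M] [Module R M] : Submodule R M :=
  sInf {N : Submodule R M | IsCoatom N}

/-- The socle of `M`: the sum of all minimal (simple) submodules of `M`. -/
def modSoc (R M : Type*) [Ring R] [AddCommGroup M] [Module R M] : Submodule R M :=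
  sSup {N : Submodule R M | IsAtom N}

/-- `M` has finite hollow dimension: for every descending chain `N₁ ⊇ N₂ ⊇ ⋯`
there is `n` such that `Nₙ / N_k` is small in `M / N_k` for all `k ≥ n`. -/
def HasFiniteHollowDim (R M : Type*) [Ring R] [AddCommGroup M] [Module R M] : Prop :=
  ∀ N : ℕ → Submodule R M, (∀ i j, i ≤ j → N j ≤ N i) →
    ∃ n, ∀ k, n ≤ k → IsSmallSubmodule (Submodule.map (N k).mkQ (N n))

/-- `M` has finite Goldie dimension: it contains no infinite direct sum of
nonzero submodules. -/
def HasFiniteGoldieDim (R M : Type*) [Ring R] [AddCommGroup M] [Module R M] : Prop :=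
  ¬ ∃ f : ℕ → Submodule R M, (∀ i, f i ≠ ⊥) ∧ iSupIndep f

lemma small_of_le {R M : Type*} [Ring R] [AddCommGroup M] [Module R M]
    {N K : Submodule R M} (h : K ≤ N) (hN : IsSmallSubmodule N) : IsSmallSubmodule K := by
  intro A hA
  exact hN A (top_le_iff.mp (hA ▸ sup_le_sup_right h A))

lemma small_sup {R M : Type*} [Ring R] [AddCommGroup M] [Module R M]
    {N K : Submodule R M} (hN : IsSmallSubmodule N) (hK : IsSmallSubmodule K) :
    IsSmallSubmodule (N ⊔ K) := by
  intro A hA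
  exact hK A (hN (K ⊔ A) (by rwa [← sup_assoc]))

lemma small_sSup {R M : Type*} [Ring R] [AddCommGroup M] [Module R M]
    {S : Set (Submodule R M)} (hfin : S.Finite) (hS : ∀ N ∈ S, IsSmallSubmodule N) :
    IsSmallSubmodule (sSup S) := by
  refine Set.Finite.induction_on (motive := fun S _ => (∀ N ∈ S, IsSmallSubmodule N) →
      IsSmallSubmodule (sSup S)) S hfin ?_ ?_ hS
  · intro _ A hA
    simpa using hA
  · intro N S _ _ ih hS
    rw [sSup_insert]
    exact small_sup (hS N (Set.mem_insert _ _)) (ih fun K hK => hS K (Set.mem_insert_of_mem _ hK))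

theorem fs_noetherian_artinian_iff_quotient (R M : Type*) [Ring R] [AddCommGroup M]
    [Module R M] (hfs : IsFsModule R M) :
    (IsNoetherian R M ↔ IsNoetherian R (M ⧸ modRad R M)) ∧
    (IsArtinian R M ↔ IsArtinian R (M ⧸ modRad R M)) := by
  have hradsmall : IsSmallSubmodule (modRad R M) := small_sSup hfs (fun N hN => hN)
  have hfin : {N : Submodule R M | N ≤ modRad R M}.Finite :=
    hfs.subset (fun N hN => small_of_le hN hradsmall)
  haveI := hfin.to_subtype
  haveI : Finite (Submodule R ↥(modRad R M)) := by
    refine Finite.of_injective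
      (fun p => (⟨p.map (modRad R M).subtype, Submodule.map_subtype_le _ p⟩ :
        ↥{N : Submodule R M | N ≤ modRad R M})) (fun p q hpq => ?_)
    exact Submodule.map_injective_of_injective (modRad R M).injective_subtype
      (congrArg Subtype.val hpq)
  haveI hN : IsNoetherian R ↥(modRad R M) := isNoetherian_mk inferInstance
  haveI hA : IsArtinian R ↥(modRad R M) := inferInstance
  constructor
  · rw [isNoetherian_iff_submodule_quotient (modRad R M)]
    exact ⟨fun h => h.2, fun h => ⟨hN, h⟩⟩
  · rw [isArtinian_iff_submodule_quotient (modRad R M)]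
    exact ⟨fun h => h.2, fun h => ⟨hA, h⟩⟩
end

section
/- Let M be an R-module with finite Goldie (uniform) dimension. Then M is an fs-module if and only if M = M₁ ⊕ M₂ where M₁ is semisimple and M₂ is an fs-module with Soc(M₂) small in M. -/
section Aux

variable {R M : Type*} [Ring R] [AddCommGroup M] [Module R M]

lemma isSmall_bot' : IsSmallSubmodule (⊥ : Submodule R M) := fun A h => by simpa using h

lemma isSmall_sup' {N P : Submodule R M} (hN : IsSmallSubmodule N) (hP : IsSmallSubmodule P) :
    IsSmallSubmodule (N ⊔ P) := fun A h => hP A (hN _ (by rwa [sup_assoc] at h))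

lemma isSmall_sSup_of_finite' {s : Set (Submodule R M)} (hs : s.Finite)
    (h : ∀ N ∈ s, IsSmallSubmodule N) : IsSmallSubmodule (sSup s) := by
  revert h
  refine Set.Finite.induction_on s hs (fun _ => by simpa [sSup_empty] using isSmall_bot') ?_
  intro a t ha hfin ih h
  rw [sSup_insert]
  exact isSmall_sup' (h _ (Set.mem_insert _ _))
    (ih fun N hN => h N (Set.mem_insert_of_mem _ hN))

/-- A small submodule of a submodule is small in the whole module. -/
lemma isSmall_map_subtype' {P : Submodule R M} {N : Submodule R P}
    (hN : IsSmallSubmodule N) : IsSmallSubmodule (N.map P.subtype) := by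
  intro A hA
  have hQP : N.map P.subtype ≤ P := by
    rintro x ⟨y, -, rfl⟩; exact y.2
  have h1 : N.map P.subtype ⊔ (A ⊓ P) = P := by
    rw [← sup_inf_assoc_of_le A hQP, hA, top_inf_eq]
  have h2 : N ⊔ (A ⊓ P).comap P.subtype = ⊤ := by
    rw [eq_top_iff]; rintro x -
    have hx : (x : M) ∈ N.map P.subtype ⊔ (A ⊓ P) := by rw [h1]; exact x.2
    obtain ⟨y, hy, z, hz, hyz⟩ := Submodule.mem_sup.1 hx
    obtain ⟨y', hy', rfl⟩ := hy
    exact Submodule.mem_sup.2 ⟨y', hy', ⟨z, hz.2⟩, hz, Subtype.ext hyz⟩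
  have h3 := hN _ h2
  have hPA : P ≤ A := by
    intro p hp
    have : (⟨p, hp⟩ : P) ∈ (A ⊓ P).comap P.subtype := h3 ▸ trivial
    exact this.1
  rw [eq_top_iff, ← hA]
  exact sup_le (hQP.trans hPA) le_rfl

/-- An fs-module has fs submodules. -/
lemma isFs_submodule' (h : IsFsModule R M) (P : Submodule R M) : IsFsModule R P := by
  have hsub : {N : Submodule R P | IsSmallSubmodule N} ⊆
      (Submodule.map P.subtype) ⁻¹' {N : Submodule R M | IsSmallSubmodule N} :=
    fun N hN => isSmall_map_subtype' hN
  exact Set.Finite.subset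
    (h.preimage (Submodule.map_injective_of_injective P.injective_subtype).injOn) hsub

lemma isSmall_map_surjective' {M' : Type*} [AddCommGroup M'] [Module R M'] (f : M →ₗ[R] M')
    (hf : Function.Surjective f) {N : Submodule R M} (hN : IsSmallSubmodule N) :
    IsSmallSubmodule (N.map f) := by
  intro A hA
  have h1 : N ⊔ A.comap f = ⊤ := by
    rw [eq_top_iff]; intro m _
    have hm : f m ∈ N.map f ⊔ A := hA ▸ trivial
    obtain ⟨y, hy, z, hz, hyz⟩ := Submodule.mem_sup.1 hm
    obtain ⟨n, hn, rfl⟩ := hy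
    refine Submodule.mem_sup.2 ⟨n, hn, m - n, ?_, by abel⟩
    have : f (m - n) = z := by rw [map_sub]; rw [← hyz]; abel
    simpa [Submodule.mem_comap, this] using hz
  have h2 := hN _ h1
  rw [eq_top_iff]; intro x _
  obtain ⟨m, rfl⟩ := hf x
  exact (h2 ▸ trivial : m ∈ A.comap f)

lemma small_eq_bot_of_semisimple' [IsSemisimpleModule R M] {N : Submodule R M}
    (h : IsSmallSubmodule N) : N = ⊥ := by
  obtain ⟨A, hA⟩ := exists_isCompl N
  have hAtop : A = ⊤ := h A hA.sup_eq_top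
  calc N = N ⊓ A := by rw [hAtop, inf_top_eq]
  _ = ⊥ := hA.inf_eq_bot

lemma exists_isCompl_of_atom_not_small' {N : Submodule R M} (hN : IsAtom N)
    (h : ¬ IsSmallSubmodule N) : ∃ C, IsCompl N C := by
  simp only [IsSmallSubmodule, not_forall] at h
  obtain ⟨A, hA, hA'⟩ := h
  refine ⟨A, disjoint_iff.2 ?_, codisjoint_iff.2 hA⟩
  rcases hN.le_iff.1 (inf_le_left : N ⊓ A ≤ N) with h0 | h1
  · exact h0
  · exact absurd (by rw [sup_eq_right.2 (h1 ▸ inf_le_right : N ≤ A)] at hA; exact hA) hA'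

/-- If `M₁ ⊕ M₂ = M` with `M₁` semisimple and `M₂` an fs-module, then `M` is fs. -/
lemma isFs_of_compl' {M₁ M₂ : Submodule R M} (hc : IsCompl M₁ M₂)
    (hss : IsSemisimpleModule R M₁) (hfs : IsFsModule R M₂) : IsFsModule R M := by
  have key : ∀ N : Submodule R M, IsSmallSubmodule N → N ≤ M₂ := by
    intro N hN
    set f := M₁.linearProjOfIsCompl M₂ hc with hfdef
    have hsur : Function.Surjective f :=
      fun x => ⟨x, Submodule.linearProjOfIsCompl_apply_left hc x⟩
    have hsmall : IsSmallSubmodule (N.map f) := isSmall_map_surjective' f hsur hN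
    have hbot : N.map f = ⊥ := small_eq_bot_of_semisimple' hsmall
    intro x hx
    have hfx : f x ∈ N.map f := ⟨x, hx, rfl⟩
    rw [hbot] at hfx
    exact (Submodule.linearProjOfIsCompl_apply_eq_zero_iff hc).1 hfx
  have hcomap : ∀ N : Submodule R M, IsSmallSubmodule N →
      IsSmallSubmodule (N.comap M₂.subtype) := by
    intro N hN A' hA'
    have hNM2 : N ≤ M₂ := key N hN
    have h1 : N ⊔ A'.map M₂.subtype = M₂ := by
      have := congrArg (Submodule.map M₂.subtype) hA'
      rwa [Submodule.map_sup, Submodule.map_comap_subtype, inf_eq_right.2 hNM2,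
        Submodule.map_top, Submodule.range_subtype] at this
    have h2 : N ⊔ (A'.map M₂.subtype ⊔ M₁) = ⊤ := by
      rw [← sup_assoc, h1, sup_comm, hc.sup_eq_top]
    have h3 := hN _ h2
    have hmapA : A'.map M₂.subtype ≤ M₂ := by rintro x ⟨y, -, rfl⟩; exact y.2
    have h4 : A'.map M₂.subtype = M₂ := by
      have h5 : (A'.map M₂.subtype ⊔ M₁) ⊓ M₂ = M₂ := by rw [h3, top_inf_eq]
      rwa [sup_inf_assoc_of_le _ hmapA, hc.inf_eq_bot, sup_bot_eq] at h5
    apply Submodule.map_injective_of_injective M₂.injective_subtype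
    rw [h4, Submodule.map_top, Submodule.range_subtype]
  have hsub : {N : Submodule R M | IsSmallSubmodule N} ⊆
      (Submodule.map M₂.subtype) '' {N' : Submodule R M₂ | IsSmallSubmodule N'} := by
    intro N hN
    refine ⟨N.comap M₂.subtype, hcomap N hN, ?_⟩
    rw [Submodule.map_comap_subtype, inf_eq_right.2 (key N hN)]
  exact (hfs.image _).subset hsub

end Aux

theorem fs_structure_of_finite_goldie (R M : Type*) [Ring R] [AddCommGroup M]
    [Module R M] (hG : HasFiniteGoldieDim R M) :
    IsFsModule R M ↔
      ∃ M₁ M₂ : Submodule R M, IsCompl M₁ M₂ ∧ IsSemisimpleModule R M₁ ∧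
        IsFsModule R M₂ ∧
        IsSmallSubmodule (sSup {N : Submodule R M | N ≤ M₂ ∧ IsAtom N}) := by
  classical
  constructor
  · intro hfs
    by_contra hcon
    have hGood : ∀ A B : Submodule R M, IsCompl A B → IsSemisimpleModule R A →
        ∃ N, IsAtom N ∧ N ≤ B ∧ ¬ IsSmallSubmodule N := by
      intro A B hAB hA
      by_contra hno; push_neg at hno
      apply hcon
      refine ⟨A, B, hAB, hA, isFs_submodule' hfs B, ?_⟩
      refine isSmall_sSup_of_finite' (hfs.subset fun N hN => hno N hN.2 hN.1)
        (fun N hN => hno N hN.2 hN.1)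
    -- build an infinite independent sequence of atoms
    let St := {AB : Submodule R M × Submodule R M //
      IsCompl AB.1 AB.2 ∧ IsSemisimpleModule R AB.1}
    have step : ∀ s : St, ∃ (t : St) (N : Submodule R M),
        IsAtom N ∧ N ≤ s.1.2 ∧ t.1.2 ≤ s.1.2 ∧ N ⊓ t.1.2 = ⊥ ∧ t.1.1 = s.1.1 ⊔ N := by
      rintro ⟨⟨A, B⟩, hAB, hA⟩
      obtain ⟨N, hNatom, hNB, hNsmall⟩ := hGood A B hAB hA
      obtain ⟨C, hC⟩ := exists_isCompl_of_atom_not_small' hNatom hNsmall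
      have h1 : (A ⊔ N) ⊓ B = N := by
        rw [sup_comm, sup_inf_assoc_of_le _ hNB, hAB.inf_eq_bot, sup_bot_eq]
      refine ⟨⟨(A ⊔ N, C ⊓ B), ⟨disjoint_iff.2 ?_, codisjoint_iff.2 ?_⟩, ?_⟩,
        N, hNatom, hNB, inf_le_right, ?_, rfl⟩
      · calc (A ⊔ N) ⊓ (C ⊓ B) = ((A ⊔ N) ⊓ B) ⊓ C := by
              rw [inf_comm C B, ← inf_assoc]
        _ = N ⊓ C := by rw [h1]
        _ = ⊥ := hC.inf_eq_bot
      · have h2 : N ⊔ (C ⊓ B) = B := by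
          rw [← sup_inf_assoc_of_le _ hNB, hC.sup_eq_top, top_inf_eq]
        rw [sup_assoc, h2, hAB.sup_eq_top]
      · haveI : IsSimpleModule R N := isSimpleModule_iff_isAtom.2 hNatom
        exact hA.sup inferInstance
      · exact le_bot_iff.1 (le_trans (inf_le_inf_left _ inf_le_left) hC.inf_eq_bot.le)
    choose tf Nf hatom hNB hBle hNdisj hAeq using step
    have s0ss : IsSemisimpleModule R (⊥ : Submodule R M) := by
      refine (isSemisimpleModule_iff R (⊥ : Submodule R M)).mpr ⟨fun a => ⟨⊥, ?_⟩⟩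
      have : a = ⊤ := Subsingleton.elim _ _
      rw [this]; exact isCompl_top_bot
    let s₀ : St := ⟨(⊥, ⊤), isCompl_bot_top, s0ss⟩
    let f : ℕ → St := fun n => tf^[n] s₀
    have hf : ∀ n, f (n + 1) = tf (f n) := fun n => Function.iterate_succ_apply' tf n s₀
    set N : ℕ → Submodule R M := fun n => Nf (f n) with hNdef
    set B : ℕ → Submodule R M := fun n => (f n).1.2 with hBdef
    set Amod : ℕ → Submodule R M := fun n => (f n).1.1 with hAdef
    have hBsucc : ∀ n, B (n + 1) ≤ B n := fun n => by
      rw [hBdef]; simp only []; rw [hf n]; exact hBle (f n)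
    have hBmono : ∀ i j, i ≤ j → B j ≤ B i := fun i j h => by
      induction j with
      | zero => simp_all
      | succ k ih =>
        rcases Nat.lt_or_ge i (k + 1) with hlt | hge
        · exact (hBsucc k).trans (ih (Nat.lt_succ_iff.1 hlt))
        · have : i = k + 1 := le_antisymm h hge
          rw [this]
    have hNB' : ∀ n, N n ≤ B n := fun n => hNB (f n)
    have hNdisj' : ∀ n, N n ⊓ B (n + 1) = ⊥ := fun n => by
      rw [hBdef]; simp only []; rw [hf n]; exact hNdisj (f n)
    have hA' : ∀ n, Amod (n + 1) = Amod n ⊔ N n := fun n => by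
      rw [hAdef]; simp only []; rw [hf n]; exact hAeq (f n)
    have hABdisj : ∀ n, Amod n ⊓ B n = ⊥ := fun n => (f n).2.1.inf_eq_bot
    have hAmono : ∀ i j, i ≤ j → Amod i ≤ Amod j := fun i j h => by
      induction j with
      | zero => simp_all
      | succ k ih =>
        rcases Nat.lt_or_ge i (k + 1) with hlt | hge
        · rw [hA' k]; exact le_sup_of_le_left (ih (Nat.lt_succ_iff.1 hlt))
        · have : i = k + 1 := le_antisymm h hge
          rw [this]
    have hNA : ∀ i j, j < i → N j ≤ Amod i := fun i j h => by
      have h1 : N j ≤ Amod (j + 1) := by rw [hA' j]; exact le_sup_right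
      exact h1.trans (hAmono _ _ h)
    apply hG
    refine ⟨N, fun i => (hatom (f i)).1, ?_⟩
    intro i
    have hle : (⨆ (j) (_ : j ≠ i), N j) ≤ Amod i ⊔ B (i + 1) := by
      refine iSup_le fun j => iSup_le fun hj => ?_
      rcases lt_or_gt_of_ne hj with h | h
      · exact le_sup_of_le_left (hNA i j h)
      · exact le_sup_of_le_right ((hNB' j).trans (hBmono (i + 1) j h))
    refine Disjoint.mono_right hle (disjoint_iff.2 ?_)
    have key : (Amod i ⊔ B (i + 1)) ⊓ B i = B (i + 1) := by
      rw [sup_comm, sup_inf_assoc_of_le _ (hBsucc i), hABdisj i, sup_bot_eq]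
    calc N i ⊓ (Amod i ⊔ B (i + 1))
        = (N i ⊓ B i) ⊓ (Amod i ⊔ B (i + 1)) := by rw [inf_of_le_left (hNB' i)]
      _ = N i ⊓ (B i ⊓ (Amod i ⊔ B (i + 1))) := inf_assoc ..
      _ = N i ⊓ B (i + 1) := by rw [inf_comm (B i) _, key]
      _ = ⊥ := hNdisj' i
  · rintro ⟨M₁, M₂, hc, hss, hfs, -⟩
    exact isFs_of_compl' hc hss hfs
end
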